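/- arXiv:1607.05206 — 2 statements merged into one kernel-verified Lean document; each statement's English description precedes it below -/
import Mathlib

section
/- Let H be a real inner product space, M ∈ ℕ, Δτ > 0, and let (E^m)_{m=2}^M, (σ_m)_{m=2}^M be elements of H and let T be a linear map on H with an adjoint square-root structure, i.e. there is a linear S with ⟨T a, b⟩ = ⟨S a, S b⟩ for all a,b. Suppose ⟨T(E^m − E^{m-1}), E^{m-1/2}⟩ + Δτ ‖E^{m-1/2}‖² = ⟨σ_m, E^{m-1/2}⟩ for m = 2,…,M, where E^{m-1/2} = (E^m + E^{m-1})/2. Then Δτ ∑_{m=2}^M ‖E^{m-1/2}‖² ≤ ‖S E^1‖² + Δτ^{-1} ∑_{m=2}^M ‖σ_m‖². -/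
open Finset

lemma tel_aux (f : ℕ → ℝ) : ∀ M : ℕ, 1 ≤ M →
    ∑ m ∈ Finset.Icc 2 M, (f (m - 1) - f m) = f 1 - f M := by
  intro M hM
  induction M with
  | zero => omega
  | succ n ih =>
    rcases Nat.lt_or_ge n 1 with h | h
    · interval_cases n
      · simp
    · rw [Finset.sum_Icc_succ_top (by omega), ih h]
      simp

/-- Abstract energy-telescoping estimate: if `⟨T a, b⟩ = ⟨S a, S b⟩` for all `a, b` and
`⟨T(Eᵐ − Eᵐ⁻¹), Eᵐ⁻¹ᐟ²⟩ + Δτ ‖Eᵐ⁻¹ᐟ²‖² = ⟨σₘ, Eᵐ⁻¹ᐟ²⟩` for `m = 2,…,M`, where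
`Eᵐ⁻¹ᐟ² = (Eᵐ + Eᵐ⁻¹)/2`, then
`Δτ ∑_{m=2}^M ‖Eᵐ⁻¹ᐟ²‖² ≤ ‖S E¹‖² + Δτ⁻¹ ∑_{m=2}^M ‖σₘ‖²`. -/
theorem stmt_6 {H : Type*} [NormedAddCommGroup H] [InnerProductSpace ℝ H]
    (T S : H →ₗ[ℝ] H) (hTS : ∀ a b : H, (inner ℝ (T a) b : ℝ) = inner ℝ (S a) (S b))
    (M : ℕ) (Δτ : ℝ) (hΔτ : 0 < Δτ) (E σ : ℕ → H)
    (heq : ∀ m, 2 ≤ m → m ≤ M →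
      (inner ℝ (T (E m - E (m - 1))) ((1 / 2 : ℝ) • (E m + E (m - 1))) : ℝ)
        + Δτ * ‖(1 / 2 : ℝ) • (E m + E (m - 1))‖ ^ 2
        = inner ℝ (σ m) ((1 / 2 : ℝ) • (E m + E (m - 1)))) :
    Δτ * ∑ m ∈ Finset.Icc 2 M, ‖(1 / 2 : ℝ) • (E m + E (m - 1))‖ ^ 2 ≤
      ‖S (E 1)‖ ^ 2 + Δτ⁻¹ * ∑ m ∈ Finset.Icc 2 M, ‖σ m‖ ^ 2 := by
  set f : ℕ → ℝ := fun m => ‖S (E m)‖ ^ 2 with hf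
  have key : ∀ m ∈ Finset.Icc 2 M,
      Δτ * ‖(1 / 2 : ℝ) • (E m + E (m - 1))‖ ^ 2
        ≤ (f (m - 1) - f m) + Δτ⁻¹ * ‖σ m‖ ^ 2 := by
    intro m hm
    rw [Finset.mem_Icc] at hm
    have h := heq m hm.1 hm.2
    set Eh := (1 / 2 : ℝ) • (E m + E (m - 1)) with hEh
    have hT : (inner ℝ (T (E m - E (m - 1))) Eh : ℝ) = (f m - f (m - 1)) / 2 := by
      rw [hTS]
      rw [hEh, map_sub, map_smul, inner_smul_right, map_add, inner_sub_left,
        inner_add_right, inner_add_right]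
      rw [real_inner_comm (S (E (m - 1))) (S (E m))]
      simp only [hf, ← real_inner_self_eq_norm_sq]
      ring
    have hCS : (inner ℝ (σ m) Eh : ℝ) ≤ ‖σ m‖ * ‖Eh‖ := real_inner_le_norm _ _
    have hyoung : ‖σ m‖ * ‖Eh‖ ≤ (Δτ⁻¹ * ‖σ m‖ ^ 2 + Δτ * ‖Eh‖ ^ 2) / 2 := by
      nlinarith [sq_nonneg (Δτ * ‖Eh‖ - ‖σ m‖), hΔτ, mul_pos hΔτ hΔτ,
        sq_nonneg ‖Eh‖, sq_nonneg ‖σ m‖, inv_pos.mpr hΔτ,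
        mul_pos (inv_pos.mpr hΔτ) hΔτ, inv_mul_cancel₀ (ne_of_gt hΔτ)]
    nlinarith [h, hT, hCS, hyoung]
  have hsum := Finset.sum_le_sum key
  rw [Finset.sum_add_distrib, ← Finset.mul_sum, ← Finset.mul_sum] at hsum
  rcases Nat.lt_or_ge M 2 with hM | hM
  · have : Finset.Icc 2 M = ∅ := by
      apply Finset.Icc_eq_empty; omega
    rw [this]
    simp
  · rw [tel_aux f M (by omega)] at hsum
    have h1 : f 1 ≤ ‖S (E 1)‖ ^ 2 := le_of_eq rfl
    have h2 : 0 ≤ f M := sq_nonneg _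
    linarith
end

section
/- The series ∑_{k=1}^∞ (1 − e^{-2(kπ)⁴ Δτ})/(kπ)⁴ is bounded by C Δτ^{3/4} for all Δτ ∈ (0,1], where C is an absolute constant. -/
open Real

lemma tail_summable (N : ℕ) : Summable (fun j : ℕ => (1:ℝ) / ((N:ℝ) + 1 + j) ^ 4) := by
  have h4 : Summable (fun n : ℕ => (1:ℝ) / (n:ℝ) ^ 4) :=
    summable_one_div_nat_pow.mpr (by norm_num)
  have := (summable_nat_add_iff (N + 1)).2 h4
  apply this.congr
  intro j
  push_cast
  ring_nf

lemma tail_bound (N : ℕ) (hN : 1 ≤ N) :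
    (∑' j : ℕ, (1:ℝ) / ((N:ℝ) + 1 + j) ^ 4) ≤ 1 / (3 * (N:ℝ) ^ 3) := by
  set d : ℕ → ℝ := fun j => 1 / (3 * ((N:ℝ) + j) ^ 3) with hd
  have hNpos : (1:ℝ) ≤ (N:ℝ) := by exact_mod_cast hN
  have hterm : ∀ j : ℕ, (1:ℝ) / ((N:ℝ) + 1 + j) ^ 4 ≤ d j - d (j + 1) := by
    intro j
    have hm : (1:ℝ) ≤ (N:ℝ) + j := le_add_of_le_of_nonneg hNpos (Nat.cast_nonneg j)
    set m : ℝ := (N:ℝ) + j with hmdef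
    have h1 : (0:ℝ) < m := lt_of_lt_of_le one_pos hm
    have h2 : (0:ℝ) < m + 1 := by linarith
    have key : d j - d (j+1) = ((m+1)^3 - m^3) / (3 * m^3 * (m+1)^3) := by
      simp only [hd]
      push_cast
      rw [div_sub_div _ _ (by positivity) (by positivity)]
      rw [show (N:ℝ) + (j:ℝ) = m from rfl, show (N:ℝ) + ((j:ℝ)+1) = m + 1 by rw [hmdef]; ring]
      rw [div_eq_div_iff (by positivity) (by positivity)]
      ring
    rw [key, show (N:ℝ) + 1 + j = m + 1 by rw [hmdef]; ring]
    rw [div_le_div_iff₀ (by positivity) (by positivity)]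
    have fact : ((m + 1) ^ 3 - m ^ 3) * (m + 1) ^ 4 - 1 * (3 * m ^ 3 * (m + 1) ^ 3)
        = (m + 1) ^ 3 * (6 * m ^ 2 + 4 * m + 1) := by ring
    nlinarith [pow_pos h2 3, sq_nonneg m,
      mul_pos (pow_pos h2 3) (by nlinarith : (0:ℝ) < 6 * m ^ 2 + 4 * m + 1)]
  have hnn : ∀ j : ℕ, (0:ℝ) ≤ 1 / ((N:ℝ) + 1 + j) ^ 4 := by
    intro j; positivity
  apply (tail_summable N).tsum_le_of_sum_le
  intro s
  obtain ⟨n, hsub⟩ : ∃ n, s ⊆ Finset.range n := ⟨(s.sup id) + 1, fun x hx =>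
    Finset.mem_range.2 (Nat.lt_succ_of_le (Finset.le_sup (f := id) hx))⟩
  calc ∑ j ∈ s, (1:ℝ) / ((N:ℝ) + 1 + j) ^ 4
      ≤ ∑ j ∈ Finset.range n, (1:ℝ) / ((N:ℝ) + 1 + j) ^ 4 :=
        Finset.sum_le_sum_of_subset_of_nonneg hsub (fun j _ _ => hnn j)
    _ ≤ ∑ j ∈ Finset.range n, (d j - d (j + 1)) :=
        Finset.sum_le_sum (fun j _ => hterm j)
    _ = d 0 - d n := Finset.sum_range_sub' d n
    _ ≤ d 0 := by
        have : 0 ≤ d n := by simp only [hd]; positivity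
        linarith
    _ = 1 / (3 * (N:ℝ) ^ 3) := by simp [hd]

/-- There is an absolute constant `C` such that for all `Δτ ∈ (0,1]`,
`∑_{k=1}^∞ (1 − e^{-2(kπ)⁴ Δτ})/(kπ)⁴ ≤ C Δτ^{3/4}`. -/
theorem stmt_12 :
    ∃ C : ℝ, 0 < C ∧ ∀ Δτ : ℝ, 0 < Δτ → Δτ ≤ 1 →
      (∑' k : ℕ+, (1 - Real.exp (-2 * ((k : ℝ) * Real.pi) ^ 4 * Δτ)) /
          ((k : ℝ) * Real.pi) ^ 4) ≤ C * Δτ ^ (3 / 4 : ℝ) := by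
  classical
  refine ⟨5, by norm_num, fun Δτ h0 h1 => ?_⟩
  set A : ℝ := Δτ ^ (-(1/4) : ℝ) with hAdef
  have hApos : 0 < A := Real.rpow_pos_of_pos h0 _
  have hA1 : 1 ≤ A := Real.one_le_rpow_of_pos_of_le_one_of_nonpos h0 h1 (by norm_num)
  set N : ℕ := ⌈A⌉₊ with hNdef
  have hN1 : 1 ≤ N := Nat.one_le_ceil_iff.mpr hApos
  have hAN : A ≤ (N:ℝ) := Nat.le_ceil A
  have hNA : (N:ℝ) ≤ 2 * A := by
    have := Nat.ceil_lt_add_one hApos.le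
    linarith
  have hπ : (1:ℝ) ≤ Real.pi := by linarith [Real.pi_gt_three]
  -- rewrite A * Δτ and A⁻³
  have hAτ : A * Δτ = Δτ ^ (3/4 : ℝ) := by
    have h : Δτ ^ (-(1/4) : ℝ) * Δτ ^ ((1:ℝ)) = Δτ ^ (3/4 : ℝ) := by
      rw [← Real.rpow_add h0]; norm_num
    have h2 : A * Δτ = Δτ ^ (-(1/4) : ℝ) * Δτ ^ ((1:ℝ)) := by
      rw [Real.rpow_one, hAdef]
    rw [h2, h]
  have hA3 : Δτ ^ (-(3/4) : ℝ) = A ^ 3 := by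
    rw [hAdef, ← Real.rpow_natCast (Δτ ^ (-(1/4):ℝ)) 3, ← Real.rpow_mul h0.le]
    norm_num
  -- per-term bounds
  set f : ℕ+ → ℝ := fun k =>
    (1 - Real.exp (-2 * ((k : ℝ) * Real.pi) ^ 4 * Δτ)) / ((k : ℝ) * Real.pi) ^ 4 with hf
  have hkpos : ∀ k : ℕ+, (1:ℝ) ≤ (k:ℝ) := by
    intro k
    exact_mod_cast k.one_le
  have hPpos : ∀ k : ℕ+, (0:ℝ) < ((k : ℝ) * Real.pi) ^ 4 := by
    intro k
    have := hkpos k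
    positivity
  have hfnonneg : ∀ k : ℕ+, 0 ≤ f k := by
    intro k
    apply div_nonneg _ (hPpos k).le
    have : Real.exp (-2 * ((k : ℝ) * Real.pi) ^ 4 * Δτ) ≤ 1 := by
      apply Real.exp_le_one_iff.mpr
      have := hPpos k
      nlinarith
    linarith
  have hbound1 : ∀ k : ℕ+, f k ≤ 2 * Δτ := by
    intro k
    have hP := hPpos k
    have hexp := Real.add_one_le_exp (-(2 * ((k : ℝ) * Real.pi) ^ 4 * Δτ))
    rw [hf]
    simp only
    rw [show -2 * ((k : ℝ) * Real.pi) ^ 4 * Δτ = -(2 * ((k : ℝ) * Real.pi) ^ 4 * Δτ) by ring]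
    rw [div_le_iff₀ hP]
    nlinarith
  have hbound2 : ∀ k : ℕ+, f k ≤ 1 / (k:ℝ) ^ 4 := by
    intro k
    have hP := hPpos k
    have hk := hkpos k
    have hk4 : (0:ℝ) < (k:ℝ) ^ 4 := by positivity
    have hk4le : (k:ℝ) ^ 4 ≤ ((k : ℝ) * Real.pi) ^ 4 := by
      apply pow_le_pow_left₀ (by linarith)
      nlinarith
    have hexp : 0 < Real.exp (-2 * ((k : ℝ) * Real.pi) ^ 4 * Δτ) := Real.exp_pos _
    rw [hf]
    simp only
    rw [div_le_div_iff₀ hP hk4]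
    nlinarith
  -- main estimate via finite partial sums
  apply tsum_le_of_sum_le' (by positivity)
  intro s
  rw [← Finset.sum_filter_add_sum_filter_not s (fun k : ℕ+ => (k:ℕ) ≤ N)]
  set s₁ := s.filter (fun k : ℕ+ => (k:ℕ) ≤ N) with hs₁
  set s₂ := s.filter (fun k : ℕ+ => ¬ (k:ℕ) ≤ N) with hs₂
  -- bound for s₁
  have hcard : s₁.card ≤ N := by
    have := Finset.card_le_card_of_injOn (fun k : ℕ+ => (k:ℕ))
      (s := s₁) (t := Finset.Icc 1 N)
      (fun k hk => by
        simp only [hs₁, Finset.coe_filter, Set.mem_setOf_eq, Finset.mem_coe, Finset.mem_filter] at hk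
        exact Finset.mem_Icc.2 ⟨k.one_le, hk.2⟩)
      (fun a _ b _ hab => PNat.coe_injective hab)
    simpa using this
  have hsum1 : ∑ k ∈ s₁, f k ≤ 4 * Δτ ^ (3/4 : ℝ) := by
    calc ∑ k ∈ s₁, f k ≤ s₁.card • (2 * Δτ) :=
          Finset.sum_le_card_nsmul _ _ _ (fun k _ => hbound1 k)
      _ = (s₁.card : ℝ) * (2 * Δτ) := by rw [nsmul_eq_mul]
      _ ≤ (N:ℝ) * (2 * Δτ) := by
          apply mul_le_mul_of_nonneg_right _ (by positivity)
          exact_mod_cast hcard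
      _ ≤ (2 * A) * (2 * Δτ) := by
          apply mul_le_mul_of_nonneg_right hNA (by positivity)
      _ = 4 * (A * Δτ) := by ring
      _ = 4 * Δτ ^ (3/4 : ℝ) := by rw [hAτ]
  -- bound for s₂
  have hmem2 : ∀ k ∈ s₂, N + 1 ≤ (k:ℕ) := by
    intro k hk
    simp only [hs₂, Finset.mem_filter] at hk
    omega
  have hsum2 : ∑ k ∈ s₂, f k ≤ Δτ ^ (3/4 : ℝ) := by
    have step1 : ∑ k ∈ s₂, f k ≤ ∑ k ∈ s₂, (1:ℝ) / (k:ℝ) ^ 4 :=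
      Finset.sum_le_sum (fun k _ => hbound2 k)
    set t := s₂.image (fun k : ℕ+ => (k:ℕ) - (N+1)) with ht
    have hinj : ∀ x ∈ s₂, ∀ y ∈ s₂,
        (x:ℕ) - (N+1) = (y:ℕ) - (N+1) → x = y := by
      intro x hx y hy hxy
      have hx' := hmem2 x hx
      have hy' := hmem2 y hy
      apply PNat.coe_injective
      omega
    have step2 : ∑ k ∈ s₂, (1:ℝ) / (k:ℝ) ^ 4
        = ∑ j ∈ t, (1:ℝ) / ((N:ℝ) + 1 + j) ^ 4 := by
      rw [ht, Finset.sum_image hinj]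
      apply Finset.sum_congr rfl
      intro k hk
      have hk' := hmem2 k hk
      have hnat : (N + 1 + ((k:ℕ) - (N+1)) : ℕ) = (k:ℕ) := by omega
      congr 1
      rw [show ((N:ℝ) + 1 + (((k:ℕ) - (N+1) : ℕ) : ℝ))
          = ((N + 1 + ((k:ℕ) - (N+1)) : ℕ) : ℝ) by push_cast; ring, hnat]
    have step3 : ∑ j ∈ t, (1:ℝ) / ((N:ℝ) + 1 + j) ^ 4
        ≤ ∑' j : ℕ, (1:ℝ) / ((N:ℝ) + 1 + j) ^ 4 :=
      (tail_summable N).sum_le_tsum t (fun j _ => by positivity)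
    have step4 := tail_bound N hN1
    have hN3 : Δτ ^ (-(3/4) : ℝ) ≤ (N:ℝ) ^ 3 := by
      rw [hA3]
      exact pow_le_pow_left₀ hApos.le hAN 3
    have hrpowpos : (0:ℝ) < Δτ ^ (-(3/4) : ℝ) := Real.rpow_pos_of_pos h0 _
    have hNpow : (0:ℝ) < (N:ℝ) ^ 3 := by positivity
    have step5 : (1:ℝ) / (3 * (N:ℝ) ^ 3) ≤ Δτ ^ (3/4 : ℝ) := by
      have h5a : (1:ℝ) / (3 * (N:ℝ) ^ 3) ≤ 1 / Δτ ^ (-(3/4) : ℝ) := by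
        apply one_div_le_one_div_of_le hrpowpos
        nlinarith
      have h5b : (1:ℝ) / Δτ ^ (-(3/4) : ℝ) = Δτ ^ (3/4 : ℝ) := by
        rw [Real.rpow_neg h0.le]
        simp
      linarith
    linarith
  linarith
end
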